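/- Let p, q > 1 with 1/p + 1/q = 1, and let u, v ∈ L¹(ℝ) be nonnegative. For t > 0 set u(·,t) = u * M_{2t} and v(·,t) = v * M_{2t}, the solutions of the heat equation w_t = w_xx with initial data u and v. Then the function Φ_{u,v}(t) = ∫_ℝ u(x,t)^{1/p} v(x,t)^{1/q} dx is nondecreasing in t on (0, ∞). -/

import Mathlib

open MeasureTheory Real

/-- The centered Gaussian density on `ℝ` with variance `s`. -/
noncomputable def gauss (s : ℝ) : ℝ → ℝ :=
  fun x => (2 * Real.pi * s) ^ (-(1:ℝ)/2) * Real.exp (-x ^ 2 / (2 * s))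

/-- `heatSol w t = w * M_{2t}`, the solution at time `t` of the heat equation
`w_t = w_xx` with initial datum `w`. -/
noncomputable def heatSol (w : ℝ → ℝ) (t : ℝ) : ℝ → ℝ :=
  fun x => ∫ y, w (x - y) * gauss (2 * t) y

open scoped ENNReal

section aux

lemma gauss_eq {s : ℝ} (hs : 0 < s) (x : ℝ) :
    gauss s x = (Real.sqrt (2 * Real.pi * s))⁻¹ * Real.exp (-x ^ 2 / (2 * s)) := by
  unfold gauss
  rw [Real.sqrt_eq_rpow, ← Real.rpow_neg (by positivity)]
  norm_num

lemma gauss_pos {s : ℝ} (hs : 0 < s) (x : ℝ) : 0 < gauss s x := by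
  have h2 : (0:ℝ) < 2 * Real.pi * s := by positivity
  exact mul_pos (Real.rpow_pos_of_pos h2 _) (Real.exp_pos _)

lemma gauss_continuous (s : ℝ) : Continuous (gauss s) := by
  unfold gauss; fun_prop

lemma gauss_le {s : ℝ} (hs : 0 < s) (x : ℝ) :
    gauss s x ≤ (Real.sqrt (2 * Real.pi * s))⁻¹ := by
  rw [gauss_eq hs]
  have h1 : Real.exp (-x ^ 2 / (2 * s)) ≤ 1 := by
    rw [Real.exp_le_one_iff]
    have h0 : (0:ℝ) ≤ x ^ 2 / (2 * s) := by positivity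
    have h0' : -x ^ 2 / (2 * s) = -(x ^ 2 / (2 * s)) := by ring
    rw [h0']
    linarith
  have h2 : (0:ℝ) ≤ (Real.sqrt (2 * Real.pi * s))⁻¹ := by positivity
  nlinarith

lemma gauss_rw {s : ℝ} (hs : 0 < s) (x : ℝ) :
    gauss s x = (2 * Real.pi * s) ^ (-(1:ℝ)/2) * Real.exp (-(1/(2*s)) * x ^ 2) := by
  unfold gauss
  congr 1
  congr 1
  field_simp

lemma gauss_integrable {s : ℝ} (hs : 0 < s) : Integrable (gauss s) := by
  have h := (integrable_exp_neg_mul_sq (b := 1/(2*s)) (by positivity)).const_mul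
    ((2 * Real.pi * s) ^ (-(1:ℝ)/2))
  exact h.congr (Filter.Eventually.of_forall fun x => (gauss_rw hs x).symm)

lemma gauss_integral {s : ℝ} (hs : 0 < s) : ∫ x, gauss s x = 1 := by
  have h1 : ∫ x, gauss s x
      = (2 * Real.pi * s) ^ (-(1:ℝ)/2) * ∫ x, Real.exp (-(1/(2*s)) * x ^ 2) := by
    rw [← integral_const_mul]
    exact integral_congr_ae (Filter.Eventually.of_forall fun x => gauss_rw hs x)
  rw [h1, integral_gaussian]
  have h2 : Real.pi / (1/(2*s)) = 2 * Real.pi * s := by field_simp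
  rw [h2, Real.sqrt_eq_rpow, ← Real.rpow_add (by positivity)]
  norm_num

/-- Convolution identity for Gaussian densities. -/
lemma gauss_conv {a b : ℝ} (ha : 0 < a) (hb : 0 < b) (x : ℝ) :
    ∫ y, gauss a y * gauss b (x - y) = gauss (a + b) x := by
  have hab : (0:ℝ) < a + b := by linarith
  set k : ℝ := (a + b) / (2 * a * b) with hk
  have hkpos : 0 < k := by positivity
  set c : ℝ := a * x / (a + b) with hc
  set C : ℝ := gauss (a + b) x * Real.sqrt ((a + b) / (2 * Real.pi * a * b)) with hC
  have key : ∀ y, gauss a y * gauss b (x - y) = C * Real.exp (-k * (y - c) ^ 2) := by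
    intro y
    rw [gauss_eq ha, gauss_eq hb, hC, gauss_eq hab]
    have hconst : (Real.sqrt (2 * Real.pi * a))⁻¹ * (Real.sqrt (2 * Real.pi * b))⁻¹
        = (Real.sqrt (2 * Real.pi * (a + b)))⁻¹ * Real.sqrt ((a + b) / (2 * Real.pi * a * b)) := by
      have h1 : Real.sqrt (2 * Real.pi * a) * Real.sqrt (2 * Real.pi * b)
          * Real.sqrt ((a + b) / (2 * Real.pi * a * b))
          = Real.sqrt (2 * Real.pi * (a + b)) := by
        rw [← Real.sqrt_mul (by positivity), ← Real.sqrt_mul (by positivity)]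
        congr 1
        field_simp
      have hA : (0:ℝ) < Real.sqrt (2 * Real.pi * a) := Real.sqrt_pos.mpr (by positivity)
      have hB : (0:ℝ) < Real.sqrt (2 * Real.pi * b) := Real.sqrt_pos.mpr (by positivity)
      have hS : (0:ℝ) < Real.sqrt (2 * Real.pi * (a + b)) := Real.sqrt_pos.mpr (by positivity)
      field_simp
      linarith [h1]
    have hexp : Real.exp (-y ^ 2 / (2 * a)) * Real.exp (-(x - y) ^ 2 / (2 * b))
        = Real.exp (-x ^ 2 / (2 * (a + b))) * Real.exp (-k * (y - c) ^ 2) := by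
      rw [← Real.exp_add, ← Real.exp_add]
      congr 1
      rw [hk, hc]
      field_simp
      ring
    calc (Real.sqrt (2 * Real.pi * a))⁻¹ * Real.exp (-y ^ 2 / (2 * a))
        * ((Real.sqrt (2 * Real.pi * b))⁻¹ * Real.exp (-(x - y) ^ 2 / (2 * b)))
        = ((Real.sqrt (2 * Real.pi * a))⁻¹ * (Real.sqrt (2 * Real.pi * b))⁻¹)
          * (Real.exp (-y ^ 2 / (2 * a)) * Real.exp (-(x - y) ^ 2 / (2 * b))) := by ring
      _ = ((Real.sqrt (2 * Real.pi * (a + b)))⁻¹ * Real.sqrt ((a + b) / (2 * Real.pi * a * b)))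
          * (Real.exp (-x ^ 2 / (2 * (a + b))) * Real.exp (-k * (y - c) ^ 2)) := by
          rw [hconst, hexp]
      _ = (Real.sqrt (2 * Real.pi * (a + b)))⁻¹ * Real.exp (-x ^ 2 / (2 * (a + b)))
          * Real.sqrt ((a + b) / (2 * Real.pi * a * b)) * Real.exp (-k * (y - c) ^ 2) := by
          ring
  calc ∫ y, gauss a y * gauss b (x - y) = ∫ y, C * Real.exp (-k * (y - c) ^ 2) := by
        exact integral_congr_ae (Filter.Eventually.of_forall key)
    _ = C * ∫ y, Real.exp (-k * (y - c) ^ 2) := integral_const_mul _ _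
    _ = C * ∫ y, Real.exp (-k * y ^ 2) := by
        congr 1
        exact integral_sub_right_eq_self (fun y => Real.exp (-k * y ^ 2)) c
    _ = C * Real.sqrt (Real.pi / k) := by rw [integral_gaussian]
    _ = gauss (a + b) x := by
        rw [hC, mul_assoc, ← Real.sqrt_mul (by positivity)]
        have : (a + b) / (2 * Real.pi * a * b) * (Real.pi / k) = 1 := by
          rw [hk]; field_simp
        rw [this, Real.sqrt_one, mul_one]

/-- The Gaussian kernel as an `ℝ≥0∞`-valued function. -/
noncomputable def Gk (s : ℝ) (y : ℝ) : ℝ≥0∞ := ENNReal.ofReal (gauss s y)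

lemma Gk_meas (s : ℝ) : Measurable (Gk s) :=
  ENNReal.measurable_ofReal.comp (gauss_continuous s).measurable

lemma Gk_ne_zero {s : ℝ} (hs : 0 < s) (y : ℝ) : Gk s y ≠ 0 := by
  simp [Gk, ENNReal.ofReal_eq_zero, not_le, gauss_pos hs y]

lemma Gk_ne_top (s : ℝ) (y : ℝ) : Gk s y ≠ ∞ := ENNReal.ofReal_ne_top

lemma Gk_lintegral {s : ℝ} (hs : 0 < s) : ∫⁻ y, Gk s y = 1 := by
  have h := ofReal_integral_eq_lintegral_ofReal (gauss_integrable hs)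
    (Filter.Eventually.of_forall fun y => (gauss_pos hs y).le)
  rw [gauss_integral hs] at h
  simpa [Gk] using h.symm

lemma Gk_conv {a b : ℝ} (ha : 0 < a) (hb : 0 < b) (y : ℝ) :
    Gk (a + b) y = ∫⁻ z, Gk a z * Gk b (y - z) := by
  have hint : Integrable (fun z => gauss a z * gauss b (y - z)) := by
    refine Integrable.mono' ((gauss_integrable ha).mul_const
      (Real.sqrt (2 * Real.pi * b))⁻¹) ?_ ?_
    · exact ((gauss_continuous a).mul ((gauss_continuous b).comp
        (continuous_const.sub continuous_id))).aestronglyMeasurable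
    · refine Filter.Eventually.of_forall fun z => ?_
      rw [Real.norm_eq_abs, abs_of_nonneg (mul_nonneg (gauss_pos ha z).le (gauss_pos hb _).le)]
      exact mul_le_mul_of_nonneg_left (gauss_le hb _) (gauss_pos ha z).le
  have h := ofReal_integral_eq_lintegral_ofReal hint
    (Filter.Eventually.of_forall fun z => mul_nonneg (gauss_pos ha z).le (gauss_pos hb _).le)
  rw [gauss_conv ha hb y] at h
  rw [Gk, h]
  refine lintegral_congr fun z => ?_
  rw [ENNReal.ofReal_mul (gauss_pos ha z).le]
  rfl

/-- Convolution with the Gaussian kernel, in `ℝ≥0∞`. -/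
noncomputable def econv (f : ℝ → ℝ≥0∞) (s : ℝ) (x : ℝ) : ℝ≥0∞ :=
  ∫⁻ y, f (x - y) * Gk s y

lemma econv_meas {f : ℝ → ℝ≥0∞} (hf : Measurable f) (s : ℝ) : Measurable (econv f s) := by
  have : Measurable (Function.uncurry fun x y => f (x - y) * Gk s y) :=
    (hf.comp (measurable_fst.sub measurable_snd)).mul ((Gk_meas s).comp measurable_snd)
  exact this.lintegral_prod_right'

lemma lintegral_translate {f : ℝ → ℝ≥0∞} (hf : Measurable f) (z : ℝ) :
    ∫⁻ x, f (x - z) = ∫⁻ x, f x := by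
  have h := (measurePreserving_add_right (volume : Measure ℝ) (-z)).lintegral_comp hf
  simpa [sub_eq_add_neg] using h

lemma econv_mass {f : ℝ → ℝ≥0∞} (hf : Measurable f) {s : ℝ} (hs : 0 < s) :
    ∫⁻ x, econv f s x = ∫⁻ x, f x := by
  unfold econv
  rw [lintegral_lintegral_swap]
  · have h1 : ∀ y, ∫⁻ x, f (x - y) * Gk s y = (∫⁻ x, f x) * Gk s y := by
      intro y
      rw [lintegral_mul_const' _ _ (Gk_ne_top s y), lintegral_translate hf y]
    simp_rw [h1]
    rw [lintegral_const_mul _ (Gk_meas s), Gk_lintegral hs, mul_one]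
  · exact ((hf.comp (measurable_fst.sub measurable_snd)).mul
      ((Gk_meas s).comp measurable_snd)).aemeasurable

lemma econv_semigroup {f : ℝ → ℝ≥0∞} (hf : Measurable f) {a b : ℝ}
    (ha : 0 < a) (hb : 0 < b) (x : ℝ) :
    econv f (a + b) x = ∫⁻ z, econv f a (x - z) * Gk b z := by
  unfold econv
  have hGk : ∀ y, Gk (a + b) y = ∫⁻ z, Gk b z * Gk a (y - z) := by
    intro y
    rw [add_comm a b]
    exact Gk_conv hb ha y
  calc ∫⁻ y, f (x - y) * Gk (a + b) y
      = ∫⁻ y, ∫⁻ z, f (x - y) * (Gk b z * Gk a (y - z)) := by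
        refine lintegral_congr fun y => ?_
        rw [hGk y, lintegral_const_mul _ (show Measurable fun z => Gk b z * Gk a (y - z) from
          (Gk_meas b).mul ((Gk_meas a).comp (measurable_const.sub measurable_id)))]
    _ = ∫⁻ z, ∫⁻ y, f (x - y) * (Gk b z * Gk a (y - z)) := by
        rw [lintegral_lintegral_swap]
        exact ((hf.comp (measurable_const.sub measurable_fst)).mul
          (((Gk_meas b).comp measurable_snd).mul ((Gk_meas a).comp
            (measurable_fst.sub measurable_snd)))).aemeasurable
    _ = ∫⁻ z, Gk b z * ∫⁻ y, f (x - y) * Gk a (y - z) := by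
        refine lintegral_congr fun z => ?_
        rw [← lintegral_const_mul _ (show Measurable fun y => f (x - y) * Gk a (y - z) from
          (hf.comp (measurable_const.sub measurable_id)).mul
          ((Gk_meas a).comp (measurable_id.sub measurable_const)))]
        refine lintegral_congr fun y => ?_
        ring
    _ = ∫⁻ z, (∫⁻ w, f (x - z - w) * Gk a w) * Gk b z := by
        refine lintegral_congr fun z => ?_
        rw [mul_comm]
        congr 1
        have h := (measurePreserving_add_right (volume : Measure ℝ) z).lintegral_comp
          (f := fun y => f (x - y) * Gk a (y - z))
          ((hf.comp (measurable_const.sub measurable_id)).mul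
            ((Gk_meas a).comp (measurable_id.sub measurable_const)))
        rw [← h]
        refine lintegral_congr fun w => ?_
        have h1 : x - (w + z) = x - z - w := by ring
        have h2 : w + z - z = w := by ring
        simp only [h1, h2]

/-- Hölder's inequality step. -/
lemma holder_pointwise {p q : ℝ} (hpq : p.HolderConjugate q)
    {F1 F2 W : ℝ → ℝ≥0∞} (h1 : Measurable F1) (h2 : Measurable F2) (hW : Measurable W)
    (hW0 : ∀ z, W z ≠ 0) (hWt : ∀ z, W z ≠ ∞) :
    ∫⁻ z, F1 z ^ (1/p) * F2 z ^ (1/q) * W z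
      ≤ (∫⁻ z, F1 z * W z) ^ (1/p) * (∫⁻ z, F2 z * W z) ^ (1/q) := by
  have key := ENNReal.lintegral_mul_le_Lp_mul_Lq (volume : Measure ℝ) hpq
    (f := fun z => (F1 z * W z) ^ (1/p)) (g := fun z => (F2 z * W z) ^ (1/q))
    ((h1.mul hW).pow_const _).aemeasurable ((h2.mul hW).pow_const _).aemeasurable
  have hp0 : p ≠ 0 := hpq.pos.ne'
  have hq0 : q ≠ 0 := hpq.symm.pos.ne'
  have e1 : ∀ z, ((F1 z * W z) ^ (1/p)) ^ p = F1 z * W z := by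
    intro z
    rw [← ENNReal.rpow_mul]
    norm_num [hp0]
  have e2 : ∀ z, ((F2 z * W z) ^ (1/q)) ^ q = F2 z * W z := by
    intro z
    rw [← ENNReal.rpow_mul]
    norm_num [hq0]
  have e3 : ∀ z, ((fun z => (F1 z * W z) ^ (1/p)) * fun z => (F2 z * W z) ^ (1/q)) z
      = F1 z ^ (1/p) * F2 z ^ (1/q) * W z := by
    intro z
    have hW1 : W z ^ (1/p) * W z ^ (1/q) = W z := by
      rw [← ENNReal.rpow_add _ _ (hW0 z) (hWt z)]
      have : 1/p + 1/q = 1 := by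
        rw [one_div, one_div]
        exact hpq.inv_add_inv_eq_one
      rw [this, ENNReal.rpow_one]
    simp only [Pi.mul_apply]
    rw [ENNReal.mul_rpow_of_nonneg _ _ (le_of_lt (one_div_pos.mpr hpq.pos)),
      ENNReal.mul_rpow_of_nonneg _ _ (le_of_lt (one_div_pos.mpr hpq.symm.pos))]
    calc F1 z ^ (1/p) * W z ^ (1/p) * (F2 z ^ (1/q) * W z ^ (1/q))
        = F1 z ^ (1/p) * F2 z ^ (1/q) * (W z ^ (1/p) * W z ^ (1/q)) := by ring
      _ = F1 z ^ (1/p) * F2 z ^ (1/q) * W z := by rw [hW1]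
  simp_rw [e3, e1, e2] at key
  exact key

end aux

/-- The functional `Φ_{u,v}(t) = ∫ u(x,t)^{1/p} v(x,t)^{1/q} dx` is nondecreasing
in `t` on `(0, ∞)`. -/
theorem holder_functional_monotone (p q : ℝ) (hp : 1 < p) (hq : 1 < q)
    (hpq : 1/p + 1/q = 1) (u v : ℝ → ℝ)
    (hu : Integrable u) (hv : Integrable v)
    (hu0 : ∀ x, 0 ≤ u x) (hv0 : ∀ x, 0 ≤ v x) :
    MonotoneOn (fun t => ∫ x, heatSol u t x ^ (1/p) * heatSol v t x ^ (1/q))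
      (Set.Ioi (0:ℝ)) := by
  classical
  have hpq' : Real.HolderConjugate p q := Real.holderConjugate_iff.mpr ⟨hp, by simpa [one_div] using hpq⟩
  -- measurable nonnegative versions of u and v
  set u' : ℝ → ℝ := fun x => max (hu.1.mk u x) 0 with hu'def
  set v' : ℝ → ℝ := fun x => max (hv.1.mk v x) 0 with hv'def
  have hu'meas : Measurable u' := hu.1.measurable_mk.max measurable_const
  have hv'meas : Measurable v' := hv.1.measurable_mk.max measurable_const
  have huu' : u =ᵐ[volume] u' := by
    filter_upwards [hu.1.ae_eq_mk] with x hx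
    simp [hu'def, ← hx, hu0 x]
  have hvv' : v =ᵐ[volume] v' := by
    filter_upwards [hv.1.ae_eq_mk] with x hx
    simp [hv'def, ← hx, hv0 x]
  have hu'0 : ∀ x, 0 ≤ u' x := fun x => le_max_right _ _
  have hv'0 : ∀ x, 0 ≤ v' x := fun x => le_max_right _ _
  have hu'int : Integrable u' := hu.congr huu'
  have hv'int : Integrable v' := hv.congr hvv'
  set fu : ℝ → ℝ≥0∞ := fun x => ENNReal.ofReal (u' x) with hfudef
  set fv : ℝ → ℝ≥0∞ := fun x => ENNReal.ofReal (v' x) with hfvdef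
  have hfu : Measurable fu := ENNReal.measurable_ofReal.comp hu'meas
  have hfv : Measurable fv := ENNReal.measurable_ofReal.comp hv'meas
  have hfu_fin : ∫⁻ x, fu x ≠ ∞ := by
    rw [← ofReal_integral_eq_lintegral_ofReal hu'int
      (Filter.Eventually.of_forall hu'0)]
    exact ENNReal.ofReal_ne_top
  have hfv_fin : ∫⁻ x, fv x ≠ ∞ := by
    rw [← ofReal_integral_eq_lintegral_ofReal hv'int
      (Filter.Eventually.of_forall hv'0)]
    exact ENNReal.ofReal_ne_top
  -- heatSol in terms of econv
  have heat_eq_u : ∀ t : ℝ, 0 < t → ∀ x : ℝ, heatSol u t x = (econv fu (2*t) x).toReal := by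
    intro t ht x
    have h2t : (0:ℝ) < 2*t := by linarith
    have h1 : heatSol u t x = heatSol u' t x := by
      unfold heatSol
      apply integral_congr_ae
      have hmp : Measure.QuasiMeasurePreserving (fun y : ℝ => x - y) volume volume :=
        (Measure.measurePreserving_sub_left volume x).quasiMeasurePreserving
      filter_upwards [hmp.ae_eq_comp huu'] with y hy
      simp only [Function.comp] at hy
      rw [hy]
    rw [h1]
    unfold heatSol econv
    rw [integral_eq_lintegral_of_nonneg_ae
      (Filter.Eventually.of_forall fun y => mul_nonneg (hu'0 _) (gauss_pos h2t _).le)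
      (show AEStronglyMeasurable (fun y => u' (x - y) * gauss (2*t) y) volume from
        ((hu'meas.comp (measurable_const.sub measurable_id)).mul
          (gauss_continuous _).measurable).aestronglyMeasurable)]
    congr 1
    refine lintegral_congr fun y => ?_
    rw [ENNReal.ofReal_mul (hu'0 _)]
    rfl
  have heat_eq_v : ∀ t : ℝ, 0 < t → ∀ x : ℝ, heatSol v t x = (econv fv (2*t) x).toReal := by
    intro t ht x
    have h2t : (0:ℝ) < 2*t := by linarith
    have h1 : heatSol v t x = heatSol v' t x := by
      unfold heatSol
      apply integral_congr_ae
      have hmp : Measure.QuasiMeasurePreserving (fun y : ℝ => x - y) volume volume :=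
        (Measure.measurePreserving_sub_left volume x).quasiMeasurePreserving
      filter_upwards [hmp.ae_eq_comp hvv'] with y hy
      simp only [Function.comp] at hy
      rw [hy]
    rw [h1]
    unfold heatSol econv
    rw [integral_eq_lintegral_of_nonneg_ae
      (Filter.Eventually.of_forall fun y => mul_nonneg (hv'0 _) (gauss_pos h2t _).le)
      (show AEStronglyMeasurable (fun y => v' (x - y) * gauss (2*t) y) volume from
        ((hv'meas.comp (measurable_const.sub measurable_id)).mul
          (gauss_continuous _).measurable).aestronglyMeasurable)]
    congr 1
    refine lintegral_congr fun y => ?_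
    rw [ENNReal.ofReal_mul (hv'0 _)]
    rfl
  -- the functional in ℝ≥0∞
  set φ : ℝ → ℝ → ℝ≥0∞ :=
    fun t x => (econv fu (2*t) x) ^ (1/p) * (econv fv (2*t) x) ^ (1/q) with hφdef
  have hφmeas : ∀ t : ℝ, Measurable (φ t) := fun t =>
    ((econv_meas hfu (2*t)).pow_const _).mul ((econv_meas hfv (2*t)).pow_const _)
  -- finiteness of ∫⁻ φ t
  have hφfin : ∀ t : ℝ, 0 < t → ∫⁻ x, φ t x ≠ ∞ := by
    intro t ht
    have h2t : (0:ℝ) < 2*t := by linarith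
    have key := ENNReal.lintegral_mul_le_Lp_mul_Lq (volume : Measure ℝ) hpq'
      (f := fun x => (econv fu (2*t) x) ^ (1/p)) (g := fun x => (econv fv (2*t) x) ^ (1/q))
      ((econv_meas hfu (2*t)).pow_const _).aemeasurable
      ((econv_meas hfv (2*t)).pow_const _).aemeasurable
    have hp0 : p ≠ 0 := hpq'.pos.ne'
    have hq0 : q ≠ 0 := hpq'.symm.pos.ne'
    have e1 : ∀ x : ℝ, ((econv fu (2*t) x) ^ (1/p)) ^ p = econv fu (2*t) x := by
      intro x; rw [← ENNReal.rpow_mul]; norm_num [hp0]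
    have e2 : ∀ x : ℝ, ((econv fv (2*t) x) ^ (1/q)) ^ q = econv fv (2*t) x := by
      intro x; rw [← ENNReal.rpow_mul]; norm_num [hq0]
    simp_rw [Pi.mul_apply, e1, e2] at key
    rw [econv_mass hfu h2t, econv_mass hfv h2t] at key
    refine ne_top_of_le_ne_top ?_ key
    exact ENNReal.mul_ne_top
      (ENNReal.rpow_ne_top_of_nonneg (le_of_lt (one_div_pos.mpr hpq'.pos)) hfu_fin)
      (ENNReal.rpow_ne_top_of_nonneg (le_of_lt (one_div_pos.mpr hpq'.symm.pos)) hfv_fin)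
  -- the real functional equals the toReal of the ℝ≥0∞ one
  have Φ_eq : ∀ t : ℝ, 0 < t →
      (∫ x, heatSol u t x ^ (1/p) * heatSol v t x ^ (1/q)) = (∫⁻ x, φ t x).toReal := by
    intro t ht
    rw [← integral_toReal (hφmeas t).aemeasurable
      (ae_lt_top (hφmeas t) (hφfin t ht))]
    refine integral_congr_ae (Filter.Eventually.of_forall fun x => ?_)
    beta_reduce
    rw [heat_eq_u t ht x, heat_eq_v t ht x, ENNReal.toReal_rpow, ENNReal.toReal_rpow,
      ← ENNReal.toReal_mul]
  -- monotonicity of ∫⁻ φ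
  intro t ht t' ht' htt'
  simp only [Set.mem_Ioi] at ht ht'
  rcases eq_or_lt_of_le htt' with rfl | hlt
  · exact le_refl _
  have hs : (0:ℝ) < t' - t := by linarith
  have h2s : (0:ℝ) < 2*(t'-t) := by linarith
  have h2t : (0:ℝ) < 2*t := by linarith
  have hsplit : 2*t' = 2*t + 2*(t'-t) := by ring
  have step : ∀ x : ℝ, econv (φ t) (2*(t'-t)) x ≤ φ t' x := by
    intro x
    have hu_sg := econv_semigroup hfu h2t h2s x
    have hv_sg := econv_semigroup hfv h2t h2s x
    have hh := holder_pointwise hpq'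
      (F1 := fun z => econv fu (2*t) (x - z)) (F2 := fun z => econv fv (2*t) (x - z))
      (W := Gk (2*(t'-t)))
      ((econv_meas hfu (2*t)).comp (measurable_const.sub measurable_id))
      ((econv_meas hfv (2*t)).comp (measurable_const.sub measurable_id))
      (Gk_meas _) (fun z => Gk_ne_zero h2s z) (fun z => Gk_ne_top _ z)
    calc econv (φ t) (2*(t'-t)) x
        = ∫⁻ z, (econv fu (2*t) (x - z)) ^ (1/p) * (econv fv (2*t) (x - z)) ^ (1/q)
            * Gk (2*(t'-t)) z := rfl
      _ ≤ (∫⁻ z, econv fu (2*t) (x - z) * Gk (2*(t'-t)) z) ^ (1/p)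
          * (∫⁻ z, econv fv (2*t) (x - z) * Gk (2*(t'-t)) z) ^ (1/q) := hh
      _ = φ t' x := by rw [hφdef]; simp only; rw [hsplit, hu_sg, hv_sg]
  have mono : ∫⁻ x, φ t x ≤ ∫⁻ x, φ t' x := by
    calc ∫⁻ x, φ t x = ∫⁻ x, econv (φ t) (2*(t'-t)) x := (econv_mass (hφmeas t) h2s).symm
      _ ≤ ∫⁻ x, φ t' x := lintegral_mono step
  beta_reduce
  rw [Φ_eq t ht, Φ_eq t' ht']
  exact ENNReal.toReal_mono (hφfin t' ht') mono
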